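/- arXiv:1110.1053 — 4 statements merged into one kernel-verified Lean document; each statement's English description precedes it below -/
import Mathlib

section
/- Let F be a field and let G be a subgroup of SL(2,F) consisting of upper triangular matrices. Suppose that for every m in the image M of the map p : G → F* sending an upper triangular matrix to its (1,1) entry, there exists b in M with b² = m. Let A ⊆ F be the set of a such that the unipotent matrix [[1,a],[0,1]] lies in G. Then for all m ∈ M and a ∈ A, the product m·a lies in A. -/
open Matrix

theorem stmt_0 (F : Type*) [Field F]
    (G : Subgroup (Matrix.SpecialLinearGroup (Fin 2) F))
    (hup : ∀ g ∈ G, (g : Matrix (Fin 2) (Fin 2) F) 1 0 = 0)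
    (M A : Set F)
    (hM : M = {m : F | ∃ g ∈ G, (g : Matrix (Fin 2) (Fin 2) F) 0 0 = m})
    (hA : A = {a : F | ∃ g ∈ G, (g : Matrix (Fin 2) (Fin 2) F) = !![1, a; 0, 1]})
    (hsq : ∀ m ∈ M, ∃ b ∈ M, b ^ 2 = m) :
    ∀ m ∈ M, ∀ a ∈ A, m * a ∈ A := by
  subst hM hA
  intro m hm a ha
  obtain ⟨b, hb, hb2⟩ := hsq m hm
  obtain ⟨g, hg, hg00⟩ := hb
  obtain ⟨u, hu, huu⟩ := ha
  have hg10 := hup g hg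
  have hdet : (g : Matrix (Fin 2) (Fin 2) F).det = 1 := g.prop
  rw [Matrix.det_fin_two, hg00, hg10] at hdet
  simp only [mul_zero, sub_zero] at hdet
  set c := (g : Matrix (Fin 2) (Fin 2) F) 0 1 with hc
  set d := (g : Matrix (Fin 2) (Fin 2) F) 1 1 with hd
  have hgmat : (g : Matrix (Fin 2) (Fin 2) F) = !![b, c; 0, d] := by
    rw [Matrix.eta_fin_two (g : Matrix (Fin 2) (Fin 2) F), hg00, hg10]
  refine ⟨g * u * g⁻¹, mul_mem (mul_mem hg hu) (inv_mem hg), ?_⟩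
  have : ((g * u * g⁻¹ : Matrix.SpecialLinearGroup (Fin 2) F) : Matrix (Fin 2) (Fin 2) F)
      = (g : Matrix (Fin 2) (Fin 2) F) * (u : Matrix (Fin 2) (Fin 2) F)
        * ((g : Matrix (Fin 2) (Fin 2) F)).adjugate := by
    simp [Matrix.SpecialLinearGroup.coe_inv]
  rw [this, hgmat, huu, Matrix.adjugate_fin_two]
  rw [Matrix.mul_fin_two, Matrix.mul_fin_two]
  ext i j
  fin_cases i <;> fin_cases j <;>
    simp <;>
    first
      | linear_combination hdet
      | linear_combination a * hb2
end

section
/- Let F be a field and G a subgroup of SL(2,F) of upper triangular matrices, with M and A defined as before, and assume every element of M has a square root in M. For m ∈ M, let Γ_m = {γ ∈ F : [[m,γ],[0,m⁻¹]] ∈ G}. Then for γ, γ' ∈ F with γ ∈ Γ_m: γ' ∈ Γ_m if and only if γ − γ' ∈ A. -/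
open Matrix

lemma sl2_coe_inv_aux {F : Type*} [Field F] (h : Matrix.SpecialLinearGroup (Fin 2) F)
    (b δ : F) (hh : (h : Matrix (Fin 2) (Fin 2) F) = !![b, δ; 0, b⁻¹]) :
    ((h⁻¹ : Matrix.SpecialLinearGroup (Fin 2) F) : Matrix (Fin 2) (Fin 2) F)
      = !![b⁻¹, -δ; 0, b] := by
  rw [Matrix.SpecialLinearGroup.coe_inv, hh, Matrix.adjugate_fin_two]
  norm_num

lemma sl2_det_aux {F : Type*} [Field F] (h : Matrix.SpecialLinearGroup (Fin 2) F)
    (b δ : F) (hh : (h : Matrix (Fin 2) (Fin 2) F) = !![b, δ; 0, b⁻¹]) :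
    b * b⁻¹ = 1 := by
  have := h.property
  rw [hh, Matrix.det_fin_two_of] at this
  linear_combination this

lemma conj_aux {F : Type*} [Field F] (h u : Matrix.SpecialLinearGroup (Fin 2) F)
    (b δ a : F) (hh : (h : Matrix (Fin 2) (Fin 2) F) = !![b, δ; 0, b⁻¹])
    (hu : (u : Matrix (Fin 2) (Fin 2) F) = !![1, a; 0, 1]) :
    ((h * u * h⁻¹ : Matrix.SpecialLinearGroup (Fin 2) F) : Matrix (Fin 2) (Fin 2) F)
      = !![1, b * b * a; 0, 1] := by
  have hb : b * b⁻¹ = 1 := sl2_det_aux h b δ hh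
  have hb' : b⁻¹ * b = 1 := by rw [mul_comm]; exact hb
  rw [Matrix.SpecialLinearGroup.coe_mul, Matrix.SpecialLinearGroup.coe_mul,
    sl2_coe_inv_aux h b δ hh, hh, hu]
  have hbne : b ≠ 0 := fun h0 => by simp [h0] at hb
  ext i j
  fin_cases i <;> fin_cases j <;>
    (simp [Matrix.mul_apply, Fin.sum_univ_two]; try ring; try field_simp; try ring)

theorem stmt_1 (F : Type*) [Field F]
    (G : Subgroup (Matrix.SpecialLinearGroup (Fin 2) F))
    (hup : ∀ g ∈ G, (g : Matrix (Fin 2) (Fin 2) F) 1 0 = 0)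
    (M A : Set F) (Γ : F → Set F)
    (hM : M = {m : F | ∃ γ : F, ∃ g ∈ G, (g : Matrix (Fin 2) (Fin 2) F) = !![m, γ; 0, m⁻¹]})
    (hA : A = {a : F | ∃ g ∈ G, (g : Matrix (Fin 2) (Fin 2) F) = !![1, a; 0, 1]})
    (hΓ : ∀ m : F, Γ m = {γ : F | ∃ g ∈ G, (g : Matrix (Fin 2) (Fin 2) F) = !![m, γ; 0, m⁻¹]})
    (hsq : ∀ m ∈ M, ∃ b ∈ M, b ^ 2 = m) :
    ∀ m ∈ M, ∀ γ γ' : F, γ ∈ Γ m → (γ' ∈ Γ m ↔ γ - γ' ∈ A) := by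
  intro m hm γ γ' hγ
  obtain ⟨b, hbM, hb2⟩ := hsq m hm
  rw [hM] at hbM
  obtain ⟨δ, h, hhG, hh⟩ := hbM
  have hbdet : b * b⁻¹ = 1 := sl2_det_aux h b δ hh
  have hbne : b ≠ 0 := fun h0 => by simp [h0] at hbdet
  rw [hΓ] at hγ ⊢
  obtain ⟨g, hgG, hg⟩ := hγ
  have hmdet : m * m⁻¹ = 1 := sl2_det_aux g m γ hg
  have hmne : m ≠ 0 := fun h0 => by simp [h0] at hmdet
  have hinv : ((h⁻¹ : Matrix.SpecialLinearGroup (Fin 2) F) : Matrix (Fin 2) (Fin 2) F)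
      = !![b⁻¹, -δ; 0, (b⁻¹)⁻¹] := by
    rw [sl2_coe_inv_aux h b δ hh, inv_inv]
  rw [hA]
  constructor
  · rintro ⟨g', hg'G, hg'⟩
    -- u0 = g'⁻¹ * g has top entry m⁻¹ * (γ - γ')
    have hu0 : ((g'⁻¹ * g : Matrix.SpecialLinearGroup (Fin 2) F) : Matrix (Fin 2) (Fin 2) F)
        = !![1, m⁻¹ * (γ - γ'); 0, 1] := by
      rw [Matrix.SpecialLinearGroup.coe_mul, sl2_coe_inv_aux g' m γ' hg', hg]
      ext i j
      fin_cases i <;> fin_cases j <;>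
        (simp [Matrix.mul_apply, Fin.sum_univ_two]; try ring; try field_simp; try ring)
    refine ⟨h * (g'⁻¹ * g) * h⁻¹, mul_mem (mul_mem hhG (mul_mem (inv_mem hg'G) hgG)) (inv_mem hhG), ?_⟩
    rw [conj_aux h _ b δ _ hh hu0]
    congr 1
    have : b * b = m := by rw [← hb2]; ring
    rw [this]
    field_simp
  · rintro ⟨u, huG, hu⟩
    -- w = h⁻¹ * u * h has top entry b⁻¹*b⁻¹*(γ-γ') = m⁻¹ * (γ-γ')
    have hw : ((h⁻¹ * u * (h⁻¹)⁻¹ : Matrix.SpecialLinearGroup (Fin 2) F) : Matrix (Fin 2) (Fin 2) F)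
        = !![1, b⁻¹ * b⁻¹ * (γ - γ'); 0, 1] := conj_aux h⁻¹ u b⁻¹ (-δ) _ hinv hu
    refine ⟨g * (h⁻¹ * u * (h⁻¹)⁻¹)⁻¹, mul_mem hgG (inv_mem (mul_mem (mul_mem (inv_mem hhG) huG) (inv_mem (inv_mem hhG)))), ?_⟩
    have hwinv : (((h⁻¹ * u * (h⁻¹)⁻¹)⁻¹ : Matrix.SpecialLinearGroup (Fin 2) F) : Matrix (Fin 2) (Fin 2) F)
        = !![1, -(b⁻¹ * b⁻¹ * (γ - γ')); 0, 1] := by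
      rw [Matrix.SpecialLinearGroup.coe_inv, hw, Matrix.adjugate_fin_two]
      norm_num
    rw [Matrix.SpecialLinearGroup.coe_mul, hg, hwinv]
    have hbb : b⁻¹ * b⁻¹ = m⁻¹ := by
      rw [← hb2]; field_simp
    ext i j
    fin_cases i <;> fin_cases j <;>
      simp [Matrix.mul_apply, Fin.sum_univ_two, hbb] <;> field_simp <;> ring
end

section
/- Let R be a commutative ring (with 2 invertible) with commuting derivations ∂_z and ∂'. Given r ∈ R, the system of equations ∂_z a = c − br, ∂_z b = d − a, ∂_z c = (a−d)r + ∂'r, ∂_z d = br − c has a solution (a,b,c,d) ∈ R⁴ if and only if there exists b ∈ R satisfying the third-order equation (1/2)·∂_z³ b = 2(∂_z b)·r + b·(∂_z r) − ∂' r. -/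
theorem stmt_9 (R : Type*) [CommRing R] [Invertible (2 : R)]
    (δz δ' : Derivation ℤ R R)
    (hcomm : ∀ x, δz (δ' x) = δ' (δz x))
    (r : R) :
    (∃ a b c d : R,
        δz a = c - b * r ∧ δz b = d - a ∧ δz c = (a - d) * r + δ' r ∧ δz d = b * r - c) ↔
      (∃ b : R, ⅟(2 : R) * δz (δz (δz b)) = 2 * δz b * r + b * δz r - δ' r) := by
  have h2z : δz (2 : R) = 0 := by
    have : ((2 : R)) = ((1 : R) + 1) := by norm_num
    rw [this, map_add, δz.map_one_eq_zero, add_zero]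
  have hinv : δz (⅟(2 : R)) = 0 := by
    have h1 : δz ((2 : R) * ⅟(2 : R)) = 0 := by rw [mul_invOf_self, δz.map_one_eq_zero]
    rw [Derivation.leibniz, smul_eq_mul, smul_eq_mul, h2z, mul_zero, add_zero] at h1
    have := congrArg (fun x => ⅟(2 : R) * x) h1
    simpa [← mul_assoc, invOf_mul_self] using this
  have h2i : (⅟(2 : R)) * 2 = 1 := invOf_mul_self 2
  constructor
  · rintro ⟨a, b, c, d, h1, h2, h3, h4⟩
    refine ⟨b, ?_⟩
    have h5 : δz (δz b) = δz d - δz a := by rw [h2, map_sub]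
    have h6 : δz (δz (δz b)) = δz (δz d) - δz (δz a) := by rw [h5, map_sub]
    rw [h4, h1] at h6
    rw [map_sub, map_sub, Derivation.leibniz, h3] at h6
    have hX : δz (δz (δz b)) = 2 * (2 * δz b * r + b * δz r - δ' r) := by
      rw [h6]; simp only [smul_eq_mul]; linear_combination -2 * r * h2
    rw [hX, ← mul_assoc, h2i, one_mul]
  · rintro ⟨b, hb⟩
    have hb3 : δz (δz (δz b)) = 2 * (2 * δz b * r + b * δz r - δ' r) := by
      have := congrArg (fun x => (2 : R) * x) hb
      simpa [← mul_assoc, mul_invOf_self] using this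
    refine ⟨-(⅟(2:R) * δz b), b, b * r - ⅟(2:R) * δz (δz b), ⅟(2:R) * δz b, ?_, ?_, ?_, ?_⟩
    · rw [map_neg, Derivation.leibniz]
      simp only [smul_eq_mul, hinv, mul_zero, add_zero]
      ring
    · linear_combination (-(δz b)) * h2i
    · rw [map_sub, Derivation.leibniz, Derivation.leibniz]
      simp only [smul_eq_mul, hinv, mul_zero, add_zero]
      rw [hb3]
      linear_combination (δ' r - r * δz b - b * δz r) * h2i
    · rw [Derivation.leibniz]
      simp only [smul_eq_mul, hinv, mul_zero, add_zero]
      ring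
end

section
/- Let F be a field of characteristic 0 and t ∈ F. There is no polynomial b(z) ∈ F[z] satisfying (1/2)·∂_z³ b = 2·(∂_z b)·(z²/4 + t) + b·(z/2) − 1, and moreover no rational function b(z) ∈ F(z) satisfies this equation (any rational solution would have to be a polynomial since z²/4 + t has no poles, and comparing leading coefficients of degree ν gives (ν+1)·f/2 = 0 for the leading coefficient f, a contradiction). -/
open Polynomial


lemma part1 (F : Type*) [Field F] [CharZero F] (t : F) :
    ¬ ∃ b : Polynomial F,
        Polynomial.C (2⁻¹ : F) * (derivative (derivative (derivative b))) =
          2 * derivative b * (Polynomial.C (4⁻¹ : F) * Polynomial.X ^ 2 + Polynomial.C t)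
            + b * (Polynomial.C (2⁻¹ : F) * Polynomial.X) - 1 := by
  rintro ⟨b, hb⟩
  have hb0 : b ≠ 0 := by rintro rfl; simp at hb
  have hlead : b.coeff b.natDegree ≠ 0 := Polynomial.leadingCoeff_ne_zero.mpr hb0
  have h := congrArg (fun p => Polynomial.coeff p (b.natDegree + 1)) hb
  simp only [mul_add] at h
  rw [coeff_eq_zero_of_natDegree_lt (by
      calc (Polynomial.C (2⁻¹:F) * (derivative (derivative (derivative b)))).natDegree
          ≤ (derivative (derivative (derivative b))).natDegree := natDegree_C_mul_le _ _
        _ ≤ (derivative (derivative b)).natDegree := (natDegree_derivative_le _).trans (Nat.sub_le _ _)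
        _ ≤ (derivative b).natDegree := (natDegree_derivative_le _).trans (Nat.sub_le _ _)
        _ ≤ b.natDegree := (natDegree_derivative_le _).trans ((Nat.sub_le _ _))
        _ < b.natDegree + 1 := Nat.lt_succ_self _)] at h
  rw [coeff_sub, coeff_add, coeff_add] at h
  have h2 : (2 * derivative b * Polynomial.C t).coeff (b.natDegree+1) = 0 :=
    coeff_eq_zero_of_natDegree_lt (by
      calc (2 * derivative b * Polynomial.C t).natDegree
          ≤ (2 * derivative b).natDegree + (Polynomial.C t).natDegree := natDegree_mul_le
        _ = (2 * derivative b).natDegree := by rw [natDegree_C, add_zero]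
        _ ≤ (2:F[X]).natDegree + (derivative b).natDegree := natDegree_mul_le
        _ = (derivative b).natDegree := by rw [natDegree_ofNat, zero_add]
        _ ≤ b.natDegree := (natDegree_derivative_le _).trans ((Nat.sub_le _ _))
        _ < b.natDegree + 1 := Nat.lt_succ_self _)
  have h3 : (b * (Polynomial.C (2⁻¹:F) * Polynomial.X)).coeff (b.natDegree+1)
      = 2⁻¹ * b.coeff b.natDegree := by
    rw [show b * (Polynomial.C (2⁻¹:F) * Polynomial.X) = (Polynomial.C (2⁻¹:F) * b) * Polynomial.X by ring,
      coeff_mul_X, coeff_C_mul]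
  have h4 : ((1:F[X])).coeff (b.natDegree+1) = 0 := by simp [Polynomial.coeff_one]
  rw [h2, h3, h4] at h
  have h1 : (2 * derivative b * (Polynomial.C (4⁻¹:F) * Polynomial.X^2)).coeff (b.natDegree+1)
      = 2⁻¹ * ((b.natDegree : F) * b.coeff b.natDegree) := by
    obtain hν0 | ⟨k, hk⟩ : b.natDegree = 0 ∨ ∃ k, b.natDegree = k+1 := by
      rcases n : b.natDegree with _ | k
      exacts [Or.inl rfl, Or.inr ⟨k, rfl⟩]
    · have hd : derivative b = 0 := by
        rw [Polynomial.eq_C_of_natDegree_eq_zero hν0]; simp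
      rw [hd, hν0]; simp
    · rw [show 2 * derivative b * (Polynomial.C (4⁻¹:F) * Polynomial.X^2)
          = (2 * Polynomial.C (4⁻¹:F) * derivative b) * Polynomial.X^2 by ring,
        hk, show k + 1 + 1 = k + 2 from rfl, coeff_mul_X_pow]
      rw [show (2:F[X]) * Polynomial.C (4⁻¹:F) = Polynomial.C (2⁻¹:F) by
        rw [← map_ofNat (Polynomial.C : F →+* F[X]) 2, ← Polynomial.C_mul]; norm_num]
      rw [coeff_C_mul, coeff_derivative]
      push_cast; ring
  rw [h1] at h
  have hkey : (2⁻¹ : F) * ((b.natDegree:F) + 1) * b.coeff b.natDegree = 0 := by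
    linear_combination -h
  have hν1 : ((b.natDegree:F) + 1) ≠ 0 := Nat.cast_add_one_ne_zero _
  rcases mul_eq_zero.mp hkey with h' | h'
  · rcases mul_eq_zero.mp h' with h'' | h''
    · exact absurd h'' (by norm_num)
    · exact hν1 h''
  · exact hlead h'

section
variable {F : Type*} [Field F] [CharZero F]
  (δ : Derivation ℤ (RatFunc F) (RatFunc F))
  (hδX : δ RatFunc.X = 1) (hδC : ∀ c : F, δ (RatFunc.C c) = 0)

include hδX hδC in
lemma delta_map (f : F[X]) :
    δ (algebraMap F[X] (RatFunc F) f) = algebraMap F[X] (RatFunc F) (derivative f) := by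
  induction f using Polynomial.induction_on' with
  | add p q hp hq =>
    rw [map_add, map_add, hp, hq, derivative_add, map_add]
  | monomial n a =>
    rw [← Polynomial.C_mul_X_pow_eq_monomial, derivative_mul, derivative_C,
      derivative_X_pow]
    simp only [zero_mul, zero_add, map_mul, map_pow, RatFunc.algebraMap_C,
      RatFunc.algebraMap_X]
    rw [Derivation.leibniz, Derivation.leibniz_pow, hδC, hδX]
    simp only [smul_eq_mul, map_natCast, smul_smul, mul_one]
    push_cast
    ring

lemma delta_div (x y : RatFunc F) (hy : y ≠ 0) :
    δ (x / y) = (δ x * y - x * δ y) / y ^ 2 := by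
  rw [div_eq_mul_inv, Derivation.leibniz, Derivation.leibniz_inv]
  simp only [smul_eq_mul]
  field_simp
  ring

set_option maxHeartbeats 1000000 in
include hδX hδC in
lemma part2 (t : F) :
    ¬ ∃ b : RatFunc F,
        (1 / 2 : RatFunc F) * δ (δ (δ b)) =
          2 * δ b * (RatFunc.X ^ 2 / 4 + RatFunc.C t)
            + b * (RatFunc.X / 2) - 1 := by
  rintro ⟨b, hb⟩
  have ha : True := trivial
  set p := b.num with hp
  set q := b.denom with hq
  have hq0 : q ≠ 0 := b.denom_ne_zero
  have haq : (algebraMap F[X] (RatFunc F)) q ≠ 0 := RatFunc.algebraMap_ne_zero hq0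
  have h2 : (2 : RatFunc F) ≠ 0 := by
    rw [← map_ofNat (algebraMap (Polynomial F) (RatFunc F)) 2]
    exact RatFunc.algebraMap_ne_zero (by norm_num)
  have h4 : (4 : RatFunc F) ≠ 0 := by
    rw [← map_ofNat (algebraMap (Polynomial F) (RatFunc F)) 4]
    exact RatFunc.algebraMap_ne_zero (by norm_num)
  have hbeq : b = (algebraMap F[X] (RatFunc F)) p / (algebraMap F[X] (RatFunc F)) q := (RatFunc.num_div_denom b).symm
  set u : F[X] := derivative p * q - derivative q * p with hu
  set w : F[X] := derivative u * q - 2 * derivative q * u with hw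
  set v : F[X] := derivative w * q - 3 * derivative q * w with hv
  have hδb : δ b = (algebraMap F[X] (RatFunc F)) u / (algebraMap F[X] (RatFunc F)) q ^ 2 := by
    rw [hbeq, delta_div, delta_map δ hδX hδC, delta_map δ hδX hδC, hu]
    · simp only [map_sub, map_mul]; ring
    · exact haq
  have hδ2 : δ (δ b) = (algebraMap F[X] (RatFunc F)) w / (algebraMap F[X] (RatFunc F)) q ^ 3 := by
    rw [hδb, delta_div _ _ _ (pow_ne_zero 2 haq), delta_map δ hδX hδC,
      Derivation.leibniz_pow, delta_map δ hδX hδC, hw]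
    simp only [map_sub, map_mul, nsmul_eq_mul, map_ofNat]
    norm_num
    field_simp
  have hδ3 : δ (δ (δ b)) = (algebraMap F[X] (RatFunc F)) v / (algebraMap F[X] (RatFunc F)) q ^ 4 := by
    rw [hδ2, delta_div _ _ _ (pow_ne_zero 3 haq), delta_map δ hδX hδC,
      Derivation.leibniz_pow, delta_map δ hδX hδC, hv]
    simp only [map_sub, map_mul, nsmul_eq_mul, map_ofNat]
    norm_num
    field_simp
  have key0 : v * (8 * q^3) = (u * q^2 * (Polynomial.X^2 + 4 * Polynomial.C t)
      + Polynomial.X * p * q^3 - 2 * q^4) * (8 * q^3) := by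
    apply RatFunc.algebraMap_injective F
    rw [hδ3, hδb, hbeq] at hb
    simp only [map_mul, map_add, map_sub, map_pow, map_ofNat, RatFunc.algebraMap_X,
      RatFunc.algebraMap_C]
    linear_combination (norm := (field_simp [haq]; ring1)) (16 * (algebraMap F[X] (RatFunc F)) q ^ 7) * hb
  have key : v = u * q^2 * (Polynomial.X^2 + 4 * Polynomial.C t)
      + Polynomial.X * p * q^3 - 2 * q^4 := by
    have h8 : (8 : F[X]) * q^3 ≠ 0 :=
      mul_ne_zero (by norm_num) (pow_ne_zero _ hq0)
    exact mul_right_cancel₀ h8 key0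
  -- q must be constant: no irreducible factor
  have hq1 : q = 1 := by
    by_contra hq1
    have hqu : ¬ IsUnit q := fun h =>
      hq1 (Polynomial.eq_one_of_monic_natDegree_zero (RatFunc.monic_denom b)
        (Polynomial.natDegree_eq_zero_of_isUnit h))
    obtain ⟨r, hr_irr, hr_dvd⟩ := WfDvdMonoid.exists_irreducible_factor hqu hq0
    have hrprime : Prime r := hr_irr.prime
    have hr0 : r ≠ 0 := hrprime.ne_zero
    have hrp : ¬ r ∣ p := fun hd =>
      hr_irr.not_isUnit ((RatFunc.isCoprime_num_denom b).isUnit_of_dvd' hd hr_dvd)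
    have hrr' : ¬ r ∣ derivative r := by
      intro hd
      have hne : derivative r ≠ 0 := by
        intro h0
        exact hr_irr.natDegree_pos.ne'
          (Polynomial.natDegree_eq_zero_of_derivative_eq_zero h0)
      exact hne (Polynomial.eq_zero_of_dvd_of_degree_lt hd
        (Polynomial.degree_derivative_lt hr0))
    have divkey : ∀ (c : F) (f g : F[X]), c ≠ 0 → ¬ r ∣ f →
        ¬ r ∣ (Polynomial.C c * derivative r * f + r * g) := by
      intro c f g hc hf hd
      have h1 : r ∣ Polynomial.C c * (derivative r * f) := by
        have e : Polynomial.C c * (derivative r * f)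
            = (Polynomial.C c * derivative r * f + r * g) - r * g := by ring
        rw [e]; exact dvd_sub hd (dvd_mul_right r g)
      have h2' : r ∣ derivative r * f := by
        have h3 : Polynomial.C c⁻¹ * (Polynomial.C c * (derivative r * f))
            = derivative r * f := by
          rw [← mul_assoc, ← Polynomial.C_mul, inv_mul_cancel₀ hc, Polynomial.C_1, one_mul]
        rw [← h3]; exact Dvd.dvd.mul_left h1 _
      rcases hrprime.dvd_mul.mp h2' with h | h
      exacts [hrr' h, hf h]
    obtain ⟨n, s, hrs, hqs⟩ := WfDvdMonoid.max_power_factor hq0 hr_irr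
    obtain ⟨m, rfl⟩ : ∃ m, n = m + 1 := by
      rcases n with _ | m
      · exfalso; apply hrs; rw [hqs, pow_zero, one_mul] at hr_dvd; exact hr_dvd
      · exact ⟨m, rfl⟩
    -- helper for derivative of r^k * f
    have L : ∀ (k : ℕ) (f : F[X]), r * derivative (r ^ k * f)
        = r ^ k * ((k : F[X]) * derivative r * f + r * derivative f) := by
      intro k f
      rw [derivative_mul, derivative_pow]
      cases k with
      | zero => simp
      | succ k =>
        simp only [Nat.add_sub_cancel, Polynomial.C_eq_natCast]
        push_cast
        ring
    set A : F[X] := ((m : F[X]) + 1) * derivative r * s + r * derivative s with hA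
    have hqd : derivative q = r ^ m * A := by
      rw [hqs, derivative_mul, derivative_pow]
      simp only [Nat.add_sub_cancel, Polynomial.C_eq_natCast, hA]
      push_cast
      ring
    set U : F[X] := derivative p * r * s - A * p with hU0
    have hU : u = r ^ m * U := by
      rw [hu, hqd, hqs, hU0]; ring
    have hru' : r * derivative u = r ^ m * ((m : F[X]) * derivative r * U + r * derivative U) := by
      rw [hU]; exact L m U
    set W : F[X] := ((m : F[X]) * derivative r * U + r * derivative U) * s - 2 * A * U with hW0
    have hWc : w = r ^ (2 * m) * W := by
      apply mul_left_cancel₀ hr0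
      have e1 : r * w = (r * derivative u) * q - 2 * derivative q * u * r := by rw [hw]; ring
      rw [e1, hru', hqd, hU, hqs, hW0]; ring
    have hrw' : r * derivative w
        = r ^ (2 * m) * (((2 * m : ℕ) : F[X]) * derivative r * W + r * derivative W) := by
      rw [hWc]; exact L (2 * m) W
    set V : F[X] := (((2 * m : ℕ) : F[X]) * derivative r * W + r * derivative W) * s - 3 * A * W
      with hV0
    have hVc : v = r ^ (3 * m) * V := by
      apply mul_left_cancel₀ hr0
      have e1 : r * v = (r * derivative w) * q - 3 * derivative q * w * r := by rw [hv]; ring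
      rw [e1, hrw', hqd, hWc, hqs, hV0]; ring
    -- non-divisibility chain
    have hrs' : ¬ r ∣ s * p := by
      intro hd
      rcases hrprime.dvd_mul.mp hd with h | h
      exacts [hrs h, hrp h]
    have hUnd : ¬ r ∣ U := by
      have hshape : U = Polynomial.C (-((m : F) + 1)) * derivative r * (s * p)
          + r * (derivative p * s - derivative s * p) := by
        rw [hU0, hA]
        push_cast [map_neg, map_add, Polynomial.C_eq_natCast, Polynomial.C_1]
        ring
      rw [hshape]
      refine divkey _ _ _ ?_ hrs'
      have hmne : ((m : F) + 1) ≠ 0 := Nat.cast_add_one_ne_zero (R := F) m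
      exact neg_ne_zero.mpr hmne
    have hUs : ¬ r ∣ U * s := by
      intro hd
      rcases hrprime.dvd_mul.mp hd with h | h
      exacts [hUnd h, hrs h]
    have hWnd : ¬ r ∣ W := by
      have hshape : W = Polynomial.C (-((m : F) + 2)) * derivative r * (U * s)
          + r * (derivative U * s - 2 * derivative s * U) := by
        rw [hW0, hA]
        push_cast [map_neg, map_add, Polynomial.C_eq_natCast, map_ofNat]
        ring
      rw [hshape]
      refine divkey _ _ _ ?_ hUs
      intro h0
      have : ((m : F) + 2) = 0 := by linear_combination -h0
      have h2' : ((m + 2 : ℕ) : F) = 0 := by push_cast; linear_combination this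
      exact (Nat.cast_ne_zero (R := F)).mpr (by omega) h2'
    have hWs : ¬ r ∣ W * s := by
      intro hd
      rcases hrprime.dvd_mul.mp hd with h | h
      exacts [hWnd h, hrs h]
    have hVnd : ¬ r ∣ V := by
      have hshape : V = Polynomial.C (-((m : F) + 3)) * derivative r * (W * s)
          + r * (derivative W * s - 3 * derivative s * W) := by
        rw [hV0, hA]
        push_cast [map_neg, map_add, Polynomial.C_eq_natCast, map_ofNat]
        ring
      rw [hshape]
      refine divkey _ _ _ ?_ hWs
      intro h0
      have : ((m : F) + 3) = 0 := by linear_combination -h0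
      have h2' : ((m + 3 : ℕ) : F) = 0 := by push_cast; linear_combination this
      exact (Nat.cast_ne_zero (R := F)).mpr (by omega) h2'
    -- but the key identity forces r ∣ V
    apply hVnd
    have hZ : r ^ (3 * m) * V = r ^ (3 * m) *
        (r * (r * (U * s ^ 2 * (Polynomial.X ^ 2 + 4 * Polynomial.C t))
          + Polynomial.X * p * r ^ 2 * s ^ 3 - 2 * r ^ (m + 3) * s ^ 4)) := by
      rw [← hVc, key, hU, hqs]; ring
    exact ⟨_, mul_left_cancel₀ (pow_ne_zero _ hr0) hZ⟩
  -- hence b is a polynomial and we contradict part1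
  rw [hq1, map_one, div_one] at hbeq
  have hd1 : δ b = algebraMap F[X] (RatFunc F) (derivative p) := by
    rw [hbeq]; exact delta_map δ hδX hδC p
  have hd2 : δ (δ b) = algebraMap F[X] (RatFunc F) (derivative (derivative p)) := by
    rw [hd1]; exact delta_map δ hδX hδC _
  have hd3 : δ (δ (δ b)) = algebraMap F[X] (RatFunc F)
      (derivative (derivative (derivative p))) := by
    rw [hd2]; exact delta_map δ hδX hδC _
  refine part1 F t ⟨p, ?_⟩
  apply RatFunc.algebraMap_injective F
  rw [hd3, hd1, hbeq] at hb
  simp only [map_mul, map_add, map_sub, map_pow, map_ofNat, map_one,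
    RatFunc.algebraMap_X, RatFunc.algebraMap_C, map_inv₀]
  linear_combination (norm := (field_simp; ring1)) hb

end


theorem stmt_11 (F : Type*) [Field F] [CharZero F] (t : F)
    (δ : Derivation ℤ (RatFunc F) (RatFunc F))
    (hδX : δ RatFunc.X = 1)
    (hδC : ∀ c : F, δ (RatFunc.C c) = 0) :
    (¬ ∃ b : Polynomial F,
        Polynomial.C (2⁻¹ : F) * (derivative (derivative (derivative b))) =
          2 * derivative b * (Polynomial.C (4⁻¹ : F) * Polynomial.X ^ 2 + Polynomial.C t)
            + b * (Polynomial.C (2⁻¹ : F) * Polynomial.X) - 1) ∧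
    (¬ ∃ b : RatFunc F,
        (1 / 2 : RatFunc F) * δ (δ (δ b)) =
          2 * δ b * (RatFunc.X ^ 2 / 4 + RatFunc.C t)
            + b * (RatFunc.X / 2) - 1) := by
  exact ⟨part1 F t, part2 δ hδX hδC t⟩
end
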